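/- Let E be a lattice-ordered effect algebra. Then E is an MV-effect algebra (i.e., (a ∨ b) ⊖ a = b ⊖ (a ∧ b) for all a, b) if and only if for all a, b ∈ E, a ∧ b = 0 implies a ≤ b'. -/
import Mathlib


/-- An effect algebra: a partial algebra `(α; ⊕, 0, 1)`.  The partial operation is
encoded by a total function `add` together with a definedness predicate `D`. -/
structure EffectAlgebra (α : Type*) where
  D : α → α → Prop
  add : α → α → α
  zero : α
  one : α
  comm_def : ∀ a b, D a b → D b a
  comm : ∀ a b, D a b → add a b = add b a
  assoc_def₁ : ∀ a b c, D a b → D (add a b) c → D b c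
  assoc_def₂ : ∀ a b c, D a b → D (add a b) c → D a (add b c)
  assoc : ∀ a b c, D a b → D (add a b) c → add (add a b) c = add a (add b c)
  orth_exists : ∀ a, ∃! b, D a b ∧ add a b = one
  add_one : ∀ a, D a one → a = zero

namespace EffectAlgebra

variable {α : Type*}
open Classical

/-- The induced order: `a ≤ b` iff `∃ c, a ⊕ c = b`. -/
def le (E : EffectAlgebra α) (a b : α) : Prop := ∃ c, E.D a c ∧ E.add a c = b

/-- The orthosupplement `a'`. -/
noncomputable def orth (E : EffectAlgebra α) (a : α) : α := (E.orth_exists a).choose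

/-- Partial difference: `sub b a = b ⊖ a`, intended for `a ≤ b`. -/
noncomputable def sub (E : EffectAlgebra α) (b a : α) : α :=
  if h : ∃ c, E.D a c ∧ E.add a c = b then h.choose else E.zero

end EffectAlgebra

namespace EffectAlgebra

variable {α : Type*}

variable (E : EffectAlgebra α)

lemma orth_D (a : α) : E.D a (E.orth a) := (E.orth_exists a).choose_spec.1.1

lemma orth_add (a : α) : E.add a (E.orth a) = E.one := (E.orth_exists a).choose_spec.1.2

lemma orth_unique {a b : α} (h1 : E.D a b) (h2 : E.add a b = E.one) : b = E.orth a :=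
  (E.orth_exists a).choose_spec.2 b ⟨h1, h2⟩

lemma orth_one : E.orth E.one = E.zero :=
  E.add_one _ (E.comm_def _ _ (E.orth_D E.one))

lemma D_one_zero : E.D E.one E.zero := by
  have h := E.orth_D E.one; rwa [E.orth_one] at h

lemma add_one_zero : E.add E.one E.zero = E.one := by
  have h := E.orth_add E.one; rwa [E.orth_one] at h

lemma orth_zero_aux (a : α) :
    E.D (E.orth a) E.zero ∧ E.add (E.orth a) E.zero = E.orth a := by
  set b := E.orth a with hb
  have h1 : E.D a b := E.orth_D a
  have h2 : E.add a b = E.one := E.orth_add a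
  have hD1 : E.D (E.add a b) E.zero := by rw [h2]; exact E.D_one_zero
  have hb0 : E.D b E.zero := E.assoc_def₁ a b E.zero h1 hD1
  have hab0 : E.D a (E.add b E.zero) := E.assoc_def₂ a b E.zero h1 hD1
  have heq : E.add (E.add a b) E.zero = E.add a (E.add b E.zero) :=
    E.assoc a b E.zero h1 hD1
  have hone : E.add a (E.add b E.zero) = E.one := by
    rw [← heq, h2, E.add_one_zero]
  exact ⟨hb0, (E.orth_unique hab0 hone).symm ▸ rfl⟩

lemma orth_orth (a : α) : E.orth (E.orth a) = a :=
  (E.orth_unique (E.comm_def _ _ (E.orth_D a))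
    ((E.comm _ _ (E.comm_def _ _ (E.orth_D a))).trans (E.orth_add a))).symm

lemma D_zero (a : α) : E.D a E.zero := by
  have h := (E.orth_zero_aux (E.orth a)).1; rwa [E.orth_orth] at h

lemma add_zero (a : α) : E.add a E.zero = a := by
  have h := (E.orth_zero_aux (E.orth a)).2; rwa [E.orth_orth] at h

lemma orth_eq_add {a b : α} (h : E.D a b) :
    E.orth b = E.add a (E.orth (E.add a b)) := by
  set d := E.add a b with hd
  have hdd : E.D d (E.orth d) := E.orth_D d
  have hd1 : E.add d (E.orth d) = E.one := E.orth_add d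
  have hba : E.D b a := E.comm_def _ _ h
  have hba' : E.add b a = d := by rw [hd, E.comm a b h]
  have hbad : E.D (E.add b a) (E.orth d) := by rw [hba']; exact hdd
  have had : E.D a (E.orth d) := E.assoc_def₁ b a _ hba hbad
  have hbD : E.D b (E.add a (E.orth d)) := E.assoc_def₂ b a _ hba hbad
  have hsum : E.add b (E.add a (E.orth d)) = E.one := by
    rw [← E.assoc b a _ hba hbad, hba', hd1]
  exact (E.orth_unique hbD hsum).symm

lemma cancel {a b c : α} (hab : E.D a b) (hac : E.D a c)
    (h : E.add a b = E.add a c) : b = c := by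
  have h1 : E.orth b = E.orth c := by
    rw [E.orth_eq_add hab, E.orth_eq_add hac, h]
  calc b = E.orth (E.orth b) := (E.orth_orth b).symm
    _ = E.orth (E.orth c) := by rw [h1]
    _ = c := E.orth_orth c

lemma add_eq_zero {a b : α} (h : E.D a b) (h0 : E.add a b = E.zero) :
    a = E.zero ∧ b = E.zero := by
  have hD : E.D (E.add a b) E.one := by
    rw [h0]; exact E.comm_def _ _ (E.D_one_zero)
  have hb : b = E.zero := E.add_one b (E.assoc_def₁ a b E.one h hD)
  have ha : a = E.zero := by rw [hb, E.add_zero] at h0; exact h0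
  exact ⟨ha, hb⟩

lemma le_refl (a : α) : E.le a a := ⟨E.zero, E.D_zero a, E.add_zero a⟩

lemma le_trans {a b c : α} (h1 : E.le a b) (h2 : E.le b c) : E.le a c := by
  obtain ⟨u, hu, rfl⟩ := h1
  obtain ⟨v, hv, rfl⟩ := h2
  exact ⟨E.add u v, E.assoc_def₂ a u v hu hv, (E.assoc a u v hu hv).symm⟩

lemma le_antisymm {a b : α} (h1 : E.le a b) (h2 : E.le b a) : a = b := by
  obtain ⟨u, hu, rfl⟩ := h1
  obtain ⟨v, hv, hv2⟩ := h2
  have huv : E.D u v := E.assoc_def₁ a u v hu hv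
  have hauv : E.D a (E.add u v) := E.assoc_def₂ a u v hu hv
  have h3 : E.add a (E.add u v) = E.add a E.zero := by
    rw [← E.assoc a u v hu hv, hv2, E.add_zero]
  have h4 : E.add u v = E.zero := E.cancel hauv (E.D_zero a) h3
  have h5 : u = E.zero := (E.add_eq_zero huv h4).1
  rw [h5, E.add_zero]

lemma sub_spec {a b : α} (h : E.le a b) :
    E.D a (E.sub b a) ∧ E.add a (E.sub b a) = b := by
  have h' : ∃ c, E.D a c ∧ E.add a c = b := h
  rw [EffectAlgebra.sub, dif_pos h']
  exact h'.choose_spec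

lemma sub_eq {a b c : α} (h1 : E.D a c) (h2 : E.add a c = b) : E.sub b a = c := by
  have hle : E.le a b := ⟨c, h1, h2⟩
  exact E.cancel (E.sub_spec hle).1 h1 (((E.sub_spec hle).2).trans h2.symm)

lemma D_of_le_orth {a b : α} (h : E.le a (E.orth b)) : E.D a b := by
  obtain ⟨c, hc, hcb⟩ := h
  have hD : E.D b (E.add c a) := by
    rw [← E.comm a c hc, hcb]; exact E.orth_D b
  have hD2 : E.D (E.add c a) b := E.comm_def _ _ hD
  exact E.assoc_def₁ c a b (E.comm_def _ _ hc) hD2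

lemma le_orth_of_D {a b : α} (h : E.D a b) : E.le a (E.orth b) := by
  have hba : E.D b a := E.comm_def _ _ h
  set d := E.add b a with hd
  have hdd : E.D (E.add b a) (E.orth d) := E.orth_D d
  have had : E.D a (E.orth d) := E.assoc_def₁ b a _ hba hdd
  have hbD : E.D b (E.add a (E.orth d)) := E.assoc_def₂ b a _ hba hdd
  have hsum : E.add b (E.add a (E.orth d)) = E.one := by
    rw [← E.assoc b a _ hba hdd]; exact E.orth_add d
  exact ⟨E.orth d, had, E.orth_unique hbD hsum⟩

lemma assoc' {a b c : α} (h1 : E.D b c) (h2 : E.D a (E.add b c)) :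
    E.D a b ∧ E.D (E.add a b) c ∧
      E.add a (E.add b c) = E.add (E.add a b) c := by
  have hcb : E.D c b := E.comm_def _ _ h1
  have hbca : E.D (E.add b c) a := E.comm_def _ _ h2
  have hcba : E.D (E.add c b) a := by rw [E.comm c b hcb]; exact hbca
  have e2 : E.add (E.add c b) a = E.add c (E.add b a) := E.assoc c b a hcb hcba
  have dba : E.D b a := E.assoc_def₁ c b a hcb hcba
  have dcba : E.D c (E.add b a) := E.assoc_def₂ c b a hcb hcba
  have dab : E.D a b := E.comm_def _ _ dba
  have dcab : E.D c (E.add a b) := by rw [← E.comm b a dba]; exact dcba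
  have dabc : E.D (E.add a b) c := E.comm_def _ _ dcab
  refine ⟨dab, dabc, ?_⟩
  calc E.add a (E.add b c) = E.add (E.add b c) a := E.comm a _ h2
    _ = E.add (E.add c b) a := by rw [E.comm c b hcb]
    _ = E.add c (E.add b a) := e2
    _ = E.add c (E.add a b) := by rw [E.comm b a dba]
    _ = E.add (E.add a b) c := E.comm c _ dcab

lemma le_cancel {a p q : α} (hp : E.D a p) (hq : E.D a q)
    (h : E.le (E.add a p) (E.add a q)) : E.le p q := by
  obtain ⟨s, hs, hs2⟩ := h
  have hps : E.D p s := E.assoc_def₁ a p s hp hs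
  have haps : E.D a (E.add p s) := E.assoc_def₂ a p s hp hs
  have h3 : E.add a (E.add p s) = E.add a q := by
    rw [← E.assoc a p s hp hs]; exact hs2
  exact ⟨s, hps, E.cancel haps hq h3⟩

lemma mono {c x t : α} (hcx : E.D c x) (h : E.le t x) :
    E.D c t ∧ E.le (E.add c t) (E.add c x) := by
  obtain ⟨s, hts, rfl⟩ := h
  obtain ⟨h1, h2, h3⟩ := E.assoc' hts hcx
  exact ⟨h1, ⟨s, h2, h3.symm⟩⟩

/-- The key "t-trick": if `e = a ⊕ y = b ⊕ x`, `v` is above `a, b` and below `e`,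
and `x, y` have no nonzero common lower bound, then `v = e`. -/
lemma key {x y a b v e : α}
    (h0 : ∀ t, E.le t x → E.le t y → t = E.zero)
    (hay : E.D a y) (hbx : E.D b x)
    (he1 : E.add a y = e) (he2 : E.add b x = e)
    (hav : E.le a v) (hbv : E.le b v) (hve : E.le v e) : v = e := by
  set p := E.sub v a with hp
  obtain ⟨hpD, hp2⟩ := E.sub_spec hav
  have hpy : E.le p y := by
    refine E.le_cancel hpD hay ?_
    rw [hp2, he1]; exact hve
  set t := E.sub y p with ht
  obtain ⟨htD, ht2⟩ := E.sub_spec hpy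
  have hapt : E.D a (E.add p t) := by rw [ht2]; exact hay
  obtain ⟨_, hDapt, heq⟩ := E.assoc' htD hapt
  have hvt : E.D v t := by rw [← hp2]; exact hDapt
  have hvte : E.add v t = e := by
    rw [← hp2, ← heq, ht2, he1]
  -- symmetric side
  set q := E.sub v b with hq
  obtain ⟨hqD, hq2⟩ := E.sub_spec hbv
  have hqx : E.le q x := by
    refine E.le_cancel hqD hbx ?_
    rw [hq2, he2]; exact hve
  set t₂ := E.sub x q with ht₂
  obtain ⟨ht₂D, ht₂2⟩ := E.sub_spec hqx
  have hbqt : E.D b (E.add q t₂) := by rw [ht₂2]; exact hbx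
  obtain ⟨_, hDbqt, heq₂⟩ := E.assoc' ht₂D hbqt
  have hvt₂ : E.D v t₂ := by rw [← hq2]; exact hDbqt
  have hvt₂e : E.add v t₂ = e := by
    rw [← hq2, ← heq₂, ht₂2, he2]
  have htt : t = t₂ := E.cancel hvt hvt₂ (hvte.trans hvt₂e.symm)
  have hty : E.le t y :=
    ⟨p, E.comm_def _ _ htD, by rw [E.comm t p (E.comm_def _ _ htD)]; exact ht2⟩
  have htx : E.le t x := by
    rw [htt]
    exact ⟨q, E.comm_def _ _ ht₂D,
      by rw [E.comm t₂ q (E.comm_def _ _ ht₂D)]; exact ht₂2⟩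
  have ht0 : t = E.zero := h0 t htx hty
  rw [← hvte, ht0, E.add_zero]

end EffectAlgebra

/-- a lattice-ordered effect algebra is an MV-effect algebra iff
`a ∧ b = 0` implies `a ≤ b'`. -/
theorem stmt2 {α : Type*} (E : EffectAlgebra α) (sup inf : α → α → α)
    (hsup : ∀ a b : α, E.le a (sup a b) ∧ E.le b (sup a b) ∧
      ∀ c, E.le a c → E.le b c → E.le (sup a b) c)
    (hinf : ∀ a b : α, E.le (inf a b) a ∧ E.le (inf a b) b ∧
      ∀ c, E.le c a → E.le c b → E.le c (inf a b)) :
    (∀ a b : α, E.sub (sup a b) a = E.sub b (inf a b)) ↔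
      (∀ a b : α, inf a b = E.zero → E.le a (E.orth b)) := by
  constructor
  · -- MV ⟹ disjoint implies orthogonal
    intro M a b hab0
    have hb : E.sub b (inf a b) = b := by
      rw [hab0]
      exact E.sub_eq (E.comm_def _ _ (E.D_zero b))
        ((E.comm _ _ (E.comm_def _ _ (E.D_zero b))).trans (E.add_zero b))
    have hM := M a b
    rw [hb] at hM
    have hs := E.sub_spec (hsup a b).1
    rw [hM] at hs
    exact E.le_orth_of_D hs.1
  · -- disjoint ⟹ orthogonal implies MV
    intro H a b
    obtain ⟨hca, hcb, hcmin⟩ := hinf a b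
    set c := inf a b with hc
    set x := E.sub a c with hxdef
    set y := E.sub b c with hydef
    obtain ⟨hxD, hx2⟩ := E.sub_spec hca
    obtain ⟨hyD, hy2⟩ := E.sub_spec hcb
    -- common lower bounds of x and y are zero
    have h0 : ∀ t, E.le t x → E.le t y → t = E.zero := by
      intro t htx hty
      obtain ⟨hct, hcta⟩ := E.mono hxD htx
      rw [hx2] at hcta
      have hctb : E.le (E.add c t) b := by
        have := (E.mono hyD hty).2
        rwa [hy2] at this
      obtain ⟨u, hu, hu2⟩ := hcmin _ hcta hctb
      have htu : E.D t u := E.assoc_def₁ c t u hct hu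
      have hctu : E.D c (E.add t u) := E.assoc_def₂ c t u hct hu
      have h3 : E.add c (E.add t u) = E.add c E.zero := by
        rw [← E.assoc c t u hct hu, hu2, E.add_zero]
      exact (E.add_eq_zero htu (E.cancel hctu (E.D_zero c) h3)).1
    have hxy : E.D x y :=
      E.D_of_le_orth (H x y (h0 _ (hinf x y).1 (hinf x y).2.1))
    have hyx : E.D y x := E.comm_def _ _ hxy
    -- sup x y = x ⊕ y
    have hsupxy : sup x y = E.add x y := by
      refine E.key h0 hxy hyx rfl (E.comm y x hyx) (hsup x y).1 (hsup x y).2.1 ?_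
      exact (hsup x y).2.2 _ ⟨y, hxy, rfl⟩ ⟨x, hyx, E.comm y x hyx⟩
    -- c is orthogonal to x ⊕ y
    have hsupc : E.le (sup x y) (E.orth c) :=
      (hsup x y).2.2 _ (E.le_orth_of_D (E.comm_def _ _ hxD))
        (E.le_orth_of_D (E.comm_def _ _ hyD))
    rw [hsupxy] at hsupc
    have hDcxy : E.D c (E.add x y) := E.comm_def _ _ (E.D_of_le_orth hsupc)
    obtain ⟨_, hDay, heq1⟩ := E.assoc' hxy hDcxy
    rw [hx2] at hDay
    have hDcyx : E.D c (E.add y x) := by rw [← E.comm x y hxy]; exact hDcxy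
    obtain ⟨_, hDbx, heq2⟩ := E.assoc' hyx hDcyx
    rw [hy2] at hDbx
    have he2 : E.add b x = E.add a y := by
      rw [← hx2, ← hy2, ← heq1, ← heq2, E.comm y x hyx]
    -- sup a b = a ⊕ y
    have hsupab : sup a b = E.add a y := by
      refine E.key h0 hDay hDbx rfl he2 (hsup a b).1 (hsup a b).2.1 ?_
      exact (hsup a b).2.2 _ ⟨y, hDay, rfl⟩ ⟨x, hDbx, he2⟩
    exact E.sub_eq hDay hsupab.symm
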